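/- Let D be a weighted oriented graph such that every vertex of V^+ is a sink, let I = I(D), and let a ∈ ℕ^n be such that the monomial x^a ∉ I^(2). Then √(I^(2) : x^a) = √(I^2 : x^a). -/

import Mathlib

open scoped BigOperators
open MvPolynomial

noncomputable section

/-- A weighted oriented graph on the vertex set `Fin n`: a loopless directed graph
together with a weight function taking values `≥ 1`. -/
structure WOGraph (n : ℕ) where
  adj : Fin n → Fin n → Prop
  loopless : ∀ i, ¬ adj i i
  w : Fin n → ℕ
  one_le_w : ∀ i, 1 ≤ w i

namespace WOGraph

variable {n : ℕ} (D : WOGraph n)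

/-- The underlying simple graph `G` of `D`. -/
def underlying : SimpleGraph (Fin n) where
  Adj i j := D.adj i j ∨ D.adj j i
  symm := ⟨fun _ _ h => h.symm⟩
  loopless := ⟨fun i h => h.elim (D.loopless i) (D.loopless i)⟩

/-- A sink: no edge leaves it. -/
def IsSink (i : Fin n) : Prop := ∀ j, ¬ D.adj i j

/-- A source: no edge enters it. -/
def IsSource (i : Fin n) : Prop := ∀ j, ¬ D.adj j i

/-- `V⁺`: the set of vertices of non-trivial weight. -/
def Vplus : Set (Fin n) := {i | 2 ≤ D.w i}

/-- Closed neighborhood `N[S]` of a set of vertices in the underlying graph. -/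
def nbhd (S : Set (Fin n)) : Set (Fin n) := S ∪ {j | ∃ i ∈ S, D.underlying.Adj i j}

/-- `{i, j, r}` induces a triangle in the underlying graph. -/
def IsTriangle (i j r : Fin n) : Prop :=
  D.underlying.Adj i j ∧ D.underlying.Adj j r ∧ D.underlying.Adj i r

/-- The maximal weight `w = max{w(x) : x ∈ V(D)}`. -/
def maxW : ℕ := Finset.univ.sup D.w

/-- Gap-free: no two disjoint edges of the underlying graph form an induced matching. -/
def GapFree : Prop := ∀ a b c d : Fin n,
  D.underlying.Adj a b → D.underlying.Adj c d → a ≠ c → a ≠ d → b ≠ c → b ≠ d →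
    (D.underlying.Adj a c ∨ D.underlying.Adj a d ∨ D.underlying.Adj b c ∨ D.underlying.Adj b d)

end WOGraph

/-- The polynomial ring `R = K[x_1, …, x_n]`. -/
abbrev MvPoly (n : ℕ) (K : Type*) [Field K] := MvPolynomial (Fin n) K

variable {n : ℕ} (K : Type*) [Field K]

/-- The edge ideal of the induced weighted oriented subgraph of `D` on a vertex subset `U`,
regarded as an ideal of `K[x_1, …, x_n]`. -/
def edgeIdealOn (D : WOGraph n) (U : Set (Fin n)) : Ideal (MvPoly n K) :=
  Ideal.span {m | ∃ i j, i ∈ U ∧ j ∈ U ∧ D.adj i j ∧ m = X i * X j ^ D.w j}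

/-- The edge ideal `I(D) = (x_i x_j^{w(x_j)} : (x_i, x_j) ∈ E(D))`. -/
def edgeIdeal (D : WOGraph n) : Ideal (MvPoly n K) := edgeIdealOn K D Set.univ

/-- The `k`-th symbolic power `I^{(k)} = ⋂_{P ∈ Min(R/I)} (I^k R_P ∩ R)`. -/
def symbolicPower {R : Type*} [CommRing R] (I : Ideal R) (k : ℕ) : Ideal R :=
  ⨅ (P : Ideal R), ⨅ (hP : P ∈ I.minimalPrimes),
    haveI : P.IsPrime := hP.1.1
    Ideal.comap (algebraMap R (Localization.AtPrime P))
      (Ideal.map (algebraMap R (Localization.AtPrime P)) (I ^ k))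

/-! ### Simplicial homology machinery, used to define multigraded Betti numbers of monomial
ideals via upper Koszul simplicial complexes, and thence Castelnuovo–Mumford regularity. -/

/-- The faces of dimension `c` (i.e. of cardinality `c + 1`) of a simplicial complex on `Fin n`. -/
abbrev Face (Δ : Set (Finset (Fin n))) (c : ℤ) : Type _ :=
  {S : Finset (Fin n) // S ∈ Δ ∧ (S.card : ℤ) = c + 1}

/-- The space of simplicial `c`-chains with coefficients in `K`. -/
abbrev SChain (Δ : Set (Finset (Fin n))) (c : ℤ) : Type _ := Face Δ c → K

open Classical in
/-- Incidence number between faces: `±1` if `T ⊂ S` with `|S \ T| = 1`, else `0`. -/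
def inc (S T : Finset (Fin n)) : K :=
  if T ⊆ S ∧ (S \ T).card = 1
  then (-1 : K) ^ (S.filter fun j => ∃ i ∈ S \ T, j < i).card
  else 0

/-- The simplicial boundary map from `c`-chains to `d`-chains (nonzero only when `d = c - 1`). -/
def bdry (Δ : Set (Finset (Fin n))) (c d : ℤ) : SChain K Δ c →ₗ[K] SChain K Δ d where
  toFun f T := ∑ᶠ S : Face Δ c, inc K S.1 T.1 * f S
  map_add' f g := by
    funext T
    simp only [Pi.add_apply, mul_add]
    exact finsum_add_distrib (Set.toFinite _) (Set.toFinite _)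
  map_smul' r f := by
    funext T
    simp only [Pi.smul_apply, smul_eq_mul, RingHom.id_apply]
    rw [mul_finsum _ _]
    exact finsum_congr fun S => by ring

/-- The reduced simplicial homology `H̃_c(Δ; K)` in dimension `c`. -/
abbrev redHomology (Δ : Set (Finset (Fin n))) (c : ℤ) : Type _ :=
  LinearMap.ker (bdry K Δ c (c - 1)) ⧸
    Submodule.comap (LinearMap.ker (bdry K Δ c (c - 1))).subtype
      (LinearMap.range (bdry K Δ (c + 1) c))

/-- The upper Koszul simplicial complex `K^a(I)` of a monomial ideal `I` in degree `a`. -/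
def upperKoszul (I : Ideal (MvPoly n K)) (a : Fin n →₀ ℕ) : Set (Finset (Fin n)) :=
  {S | (∀ i ∈ S, 1 ≤ a i) ∧
    (monomial (a - ∑ i ∈ S, Finsupp.single i 1) (1 : K)) ∈ I}

/-- The multigraded Betti number `β_{i,a}(I) = dim_K H̃_{i-1}(K^a(I); K)` of a monomial ideal. -/
def bettiMulti (I : Ideal (MvPoly n K)) (i : ℕ) (a : Fin n →₀ ℕ) : ℕ :=
  Module.finrank K (redHomology K (upperKoszul K I a) ((i : ℤ) - 1))

/-- The graded Betti number `β_{i,j}(I) = ∑_{|a| = j} β_{i,a}(I)` of a monomial ideal. -/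
def betti (I : Ideal (MvPoly n K)) (i j : ℕ) : ℕ :=
  ∑ᶠ (a : Fin n →₀ ℕ) (_ : (∑ v, a v) = j), bettiMulti K I i a

/-- Castelnuovo–Mumford regularity `reg(I) = max{j - i : β_{i,j}(I) ≠ 0}` of a monomial ideal. -/
def reg (I : Ideal (MvPoly n K)) : ℕ :=
  sSup {d : ℕ | ∃ i j : ℕ, betti K I i j ≠ 0 ∧ j = d + i}

/-- `f` is a monomial (with coefficient 1). -/
def IsMonomial (f : MvPoly n K) : Prop := ∃ e : Fin n →₀ ℕ, f = monomial e 1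

/-- `f` is a minimal monomial generator of the monomial ideal `J`. -/
def IsMinGen (J : Ideal (MvPoly n K)) (f : MvPoly n K) : Prop :=
  IsMonomial K f ∧ f ∈ J ∧ ∀ g : MvPoly n K, IsMonomial K g → g ∈ J → g ∣ f → g = f

end

noncomputable section

abbrev KeyT (n : ℕ) := ℕ ×ₗ Lex (Fin n →₀ ℕ)
def keyC {n : ℕ} (C : Finset (Fin n)) (d : Fin n →₀ ℕ) : KeyT n := toLex (∑ i ∈ C, d i, toLex d)

lemma keyC_add {n : ℕ} (C : Finset (Fin n)) (a b : Fin n →₀ ℕ) :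
    keyC C (a+b) = keyC C a + keyC C b := by
  unfold keyC
  have h1 : ∑ i ∈ C, (a + b) i = (∑ i ∈ C, a i) + ∑ i ∈ C, b i := by
    rw [← Finset.sum_add_distrib]; simp [Finsupp.add_apply]
  exact congrArg toLex (Prod.ext h1 rfl)

lemma keyC_inj {n : ℕ} (C : Finset (Fin n)) {a b : Fin n →₀ ℕ} (h : keyC C a = keyC C b) : a = b := by
  have := congrArg (fun x => (ofLex x).2) h
  simpa [keyC] using this

lemma keyC_fst_le {n : ℕ} (C : Finset (Fin n)) {a b : Fin n →₀ ℕ} (h : keyC C a ≤ keyC C b) :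
    ∑ i ∈ C, a i ≤ ∑ i ∈ C, b i := by
  rcases (Prod.Lex.le_iff).1 h with h' | h'
  · exact le_of_lt h'
  · exact le_of_eq h'.1

open Classical in
lemma exists_min_key {n : ℕ} (C : Finset (Fin n)) {K : Type*} [Field K]
    (p : MvPolynomial (Fin n) K) (hp : p ≠ 0) :
    ∃ u ∈ p.support, ∀ u' ∈ p.support, keyC C u ≤ keyC C u' := by
  obtain ⟨u, hu, hmin⟩ := Finset.exists_min_image p.support (keyC C)
    (by simpa [MvPolynomial.support_eq_empty] using hp)
  exact ⟨u, hu, hmin⟩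

lemma minsum_mem_support {n : ℕ} (C : Finset (Fin n)) {K : Type*} [Field K]
    {p q : MvPolynomial (Fin n) K} {u v : Fin n →₀ ℕ}
    (hu : u ∈ p.support) (hmu : ∀ u' ∈ p.support, keyC C u ≤ keyC C u')
    (hv : v ∈ q.support) (hmv : ∀ v' ∈ q.support, keyC C v ≤ keyC C v') :
    u + v ∈ (p * q).support := by
  classical
  rw [MvPolynomial.mem_support_iff, MvPolynomial.coeff_mul]
  have key : ∀ x ∈ Finset.HasAntidiagonal.antidiagonal (u + v), x ≠ (u, v) →
      MvPolynomial.coeff x.1 p * MvPolynomial.coeff x.2 q = 0 := by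
    rintro ⟨x1, x2⟩ hx hne
    by_contra hc
    have hx1 : x1 ∈ p.support := MvPolynomial.mem_support_iff.2 (left_ne_zero_of_mul hc)
    have hx2 : x2 ∈ q.support := MvPolynomial.mem_support_iff.2 (right_ne_zero_of_mul hc)
    have hadd : x1 + x2 = u + v := Finset.HasAntidiagonal.mem_antidiagonal.1 hx
    have hkadd : keyC C x1 + keyC C x2 = keyC C u + keyC C v := by
      rw [← keyC_add, ← keyC_add, hadd]
    have h1 : keyC C u ≤ keyC C x1 := hmu _ hx1
    have h2 : keyC C v ≤ keyC C x2 := hmv _ hx2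
    have e1 : keyC C x1 = keyC C u := by
      by_contra hne1
      have : keyC C u + keyC C v < keyC C x1 + keyC C x2 :=
        add_lt_add_of_lt_of_le (lt_of_le_of_ne h1 (Ne.symm hne1)) h2
      exact absurd hkadd (ne_of_gt this)
    have e2 : keyC C x2 = keyC C v := by
      have := hkadd
      rw [e1] at this
      exact add_left_cancel this
    exact hne (Prod.ext (keyC_inj C e1) (keyC_inj C e2))
  rw [Finset.sum_eq_single_of_mem (u, v) (Finset.HasAntidiagonal.mem_antidiagonal.2 rfl) key]
  exact mul_ne_zero (MvPolynomial.mem_support_iff.1 hu) (MvPolynomial.mem_support_iff.1 hv)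

namespace S2
variable {n : ℕ}

def expW (D : WOGraph n) (i j : Fin n) : Fin n →₀ ℕ :=
  Finsupp.single i (D.w i) + Finsupp.single j (D.w j)

def uadj (D : WOGraph n) (i j : Fin n) : Prop := D.adj i j ∨ D.adj j i

def ES (D : WOGraph n) : Set (Fin n →₀ ℕ) :=
  {e | ∃ i j, D.adj i j ∧ e = Finsupp.single i 1 + Finsupp.single j (D.w j)}

def pair2E (D : WOGraph n) (d : Fin n →₀ ℕ) : Prop :=
  ∃ e1 ∈ ES D, ∃ e2 ∈ ES D, e1 + e2 ≤ d

def Cover (D : WOGraph n) (C : Finset (Fin n)) : Prop :=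
  ∀ i j, D.adj i j → i ∈ C ∨ j ∈ C

def MinCover (D : WOGraph n) (C : Finset (Fin n)) : Prop :=
  Cover D C ∧ ∀ C' ⊆ C, Cover D C' → C' = C

def SatAt (D : WOGraph n) (C : Finset (Fin n)) (d : Fin n →₀ ℕ) : Prop :=
  ∃ e : Fin n →₀ ℕ, (∀ i ∈ C, e i = 0) ∧ pair2E D (d + e)

def Sym2c (D : WOGraph n) (d : Fin n →₀ ℕ) : Prop :=
  ∀ C, MinCover D C → SatAt D C d

def Tri (D : WOGraph n) (d : Fin n →₀ ℕ) : Prop :=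
  ∃ i j k, uadj D i j ∧ uadj D j k ∧ uadj D i k ∧
    Finsupp.single i (D.w i) + Finsupp.single j (D.w j) + Finsupp.single k (D.w k) ≤ d

variable {D : WOGraph n}

lemma uadj_symm {i j : Fin n} (h : uadj D i j) : uadj D j i := h.symm

lemma uadj_ne {i j : Fin n} (h : uadj D i j) : i ≠ j := by
  rintro rfl; exact h.elim (D.loopless i) (D.loopless i)

lemma w_tail_eq_one (hsink : ∀ i ∈ D.Vplus, D.IsSink i) {i j : Fin n} (h : D.adj i j) :
    D.w i = 1 := by
  by_contra hw
  have h1 := D.one_le_w i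
  exact hsink i (by simp only [WOGraph.Vplus, Set.mem_setOf_eq]; omega) j h

lemma expW_comm (i j : Fin n) : expW D i j = expW D j i := add_comm _ _

lemma mem_ES_iff (hsink : ∀ i ∈ D.Vplus, D.IsSink i) {e : Fin n →₀ ℕ} :
    e ∈ ES D ↔ ∃ i j, D.adj i j ∧ e = expW D i j := by
  constructor
  · rintro ⟨i, j, hij, rfl⟩
    exact ⟨i, j, hij, by rw [expW, w_tail_eq_one hsink hij]⟩
  · rintro ⟨i, j, hij, rfl⟩
    exact ⟨i, j, hij, by rw [expW, w_tail_eq_one hsink hij]⟩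

lemma uadj_expW_mem (hsink : ∀ i ∈ D.Vplus, D.IsSink i) {i j : Fin n} (h : uadj D i j) :
    expW D i j ∈ ES D := by
  rcases h with h | h
  · exact (mem_ES_iff hsink).2 ⟨i, j, h, rfl⟩
  · exact (mem_ES_iff hsink).2 ⟨j, i, h, (expW_comm i j)⟩

lemma expW_apply (i j v : Fin n) :
    expW D i j v = (if i = v then D.w i else 0) + (if j = v then D.w j else 0) := by
  simp [expW, Finsupp.single_apply, Finsupp.add_apply]

lemma le_expW_self {i j v : Fin n} (h : v = i ∨ v = j) : D.w v ≤ expW D i j v := by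
  rw [expW_apply]
  rcases h with rfl | rfl <;> simp
section
variable {d : Fin n →₀ ℕ}

lemma sum_le_of_full {i j k l : Fin n} (hij : i ≠ j) (hkl : k ≠ l)
    (hik : i ≠ k) (hil : i ≠ l) (hjk : j ≠ k) (hjl : j ≠ l)
    (fi : D.w i ≤ d i) (fj : D.w j ≤ d j) (fk : D.w k ≤ d k) (fl : D.w l ≤ d l) :
    expW D i j + expW D k l ≤ d := by
  rw [Finsupp.le_def]; intro v
  rw [Finsupp.add_apply, expW_apply, expW_apply]
  split_ifs <;> subst_vars <;> simp_all <;> omega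

lemma share_le {z a b : Fin n} (hza : z ≠ a) (hzb : z ≠ b) (hab : a ≠ b)
    (hz : 2 * D.w z ≤ d z) (fa : D.w a ≤ d a) (fb : D.w b ≤ d b) :
    expW D z a + expW D z b ≤ d := by
  rw [Finsupp.le_def]; intro v
  rw [Finsupp.add_apply, expW_apply, expW_apply]
  split_ifs <;> subst_vars <;> simp_all <;> omega

lemma double_le {z a : Fin n} (hza : z ≠ a)
    (hz : 2 * D.w z ≤ d z) (ha : 2 * D.w a ≤ d a) :
    expW D z a + expW D z a ≤ d := by
  rw [Finsupp.le_def]; intro v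
  rw [Finsupp.add_apply, expW_apply]
  split_ifs <;> subst_vars <;> simp_all <;> omega

lemma tri_single_le {i j k : Fin n} (hij : i ≠ j) (hjk : j ≠ k) (hik : i ≠ k)
    (fi : D.w i ≤ d i) (fj : D.w j ≤ d j) (fk : D.w k ≤ d k) :
    Finsupp.single i (D.w i) + Finsupp.single j (D.w j) + Finsupp.single k (D.w k) ≤ d := by
  rw [Finsupp.le_def]; intro v
  rw [Finsupp.add_apply, Finsupp.add_apply]
  rw [Finsupp.single_apply, Finsupp.single_apply, Finsupp.single_apply]
  split_ifs <;> subst_vars <;> simp_all <;> omega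

end

section
variable {d : Fin n →₀ ℕ}

lemma pair2E_mono {d d' : Fin n →₀ ℕ} (h : pair2E D d) (hdd : d ≤ d') : pair2E D d' := by
  obtain ⟨e1, h1, e2, h2, hle⟩ := h
  exact ⟨e1, h1, e2, h2, le_trans hle hdd⟩

lemma pair2E_sym2 (h : pair2E D d) : Sym2c D d :=
  fun _C _hC => ⟨0, fun _ _ => rfl, by simpa using h⟩

lemma cover_choose {C : Finset (Fin n)} (hC : Cover D C) {i j : Fin n} (h : uadj D i j) :
    ∃ v ∈ C, v = i ∨ v = j := by
  rcases h with h | h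
  · rcases hC i j h with h' | h'
    · exact ⟨i, h', Or.inl rfl⟩
    · exact ⟨j, h', Or.inr rfl⟩
  · rcases hC j i h with h' | h'
    · exact ⟨j, h', Or.inr rfl⟩
    · exact ⟨i, h', Or.inl rfl⟩

open Classical in
lemma exists_minCover_sub {U : Finset (Fin n)} (hU : Cover D U) :
    ∃ C ⊆ U, MinCover D C := by
  obtain ⟨C, hC, hmin⟩ := Finset.exists_min_image
    ((U.powerset).filter (fun C => Cover D C)) Finset.card
    ⟨U, by simp [hU]⟩
  simp only [Finset.mem_filter, Finset.mem_powerset] at hC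
  refine ⟨C, hC.1, hC.2, ?_⟩
  intro C' hsub hcov
  have hcard : C.card ≤ C'.card := hmin C'
    (by simp only [Finset.mem_filter, Finset.mem_powerset]; exact ⟨hsub.trans hC.1, hcov⟩)
  exact Finset.eq_of_subset_of_card_le hsub hcard

lemma minCover_escape {C : Finset (Fin n)} (hC : MinCover D C) {v : Fin n} (hv : v ∈ C) :
    ∃ s, s ∉ C ∧ uadj D v s := by
  by_contra hcon
  push_neg at hcon
  have hcov : Cover D (C.erase v) := by
    intro i j hij
    by_contra hc
    push_neg at hc
    rcases hc with ⟨hi, hj⟩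
    have hij' : i ≠ j := fun h => D.loopless i (h ▸ hij)
    by_cases hiv : i = v
    · subst hiv
      have hjC : j ∉ C := fun hjC => hj (Finset.mem_erase.2 ⟨fun h => hij' h.symm, hjC⟩)
      exact hcon j hjC (Or.inl hij)
    · by_cases hjv : j = v
      · subst hjv
        have hiC : i ∉ C := fun hiC => hi (Finset.mem_erase.2 ⟨hiv, hiC⟩)
        exact hcon i hiC (Or.inr hij)
      · rcases hC.1 i j hij with h | h
        · exact hi (Finset.mem_erase.2 ⟨hiv, h⟩)
        · exact hj (Finset.mem_erase.2 ⟨hjv, h⟩)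
  have := hC.2 (C.erase v) (Finset.erase_subset _ _) hcov
  exact (Finset.notMem_erase v C) (by rw [this]; exact hv)

lemma notSat_of (hsink : ∀ i ∈ D.Vplus, D.IsSink i) {C : Finset (Fin n)} {d : Fin n →₀ ℕ}
    (hkey : ∀ i j k l, uadj D i j → uadj D k l →
      ∃ v ∈ C, d v < expW D i j v + expW D k l v) :
    ¬ SatAt D C d := by
  rintro ⟨e, he, e1, h1, e2, h2, hle⟩
  obtain ⟨i, j, hij, rfl⟩ := (mem_ES_iff hsink).1 h1
  obtain ⟨k, l, hkl, rfl⟩ := (mem_ES_iff hsink).1 h2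
  obtain ⟨v, hvC, hv⟩ := hkey i j k l (Or.inl hij) (Or.inl hkl)
  have hco := Finsupp.le_def.1 hle v
  rw [Finsupp.add_apply, Finsupp.add_apply, he v hvC] at hco
  omega

lemma case_one (hsink : ∀ i ∈ D.Vplus, D.IsSink i)
    (hnf : ¬ ∃ i j, uadj D i j ∧ D.w i ≤ d i ∧ D.w j ≤ d j) :
    ∃ C, MinCover D C ∧ ¬ SatAt D C d := by
  classical
  have hcov : Cover D (Finset.univ.filter (fun v => d v < D.w v)) := by
    intro i j hij
    by_contra hc
    push_neg at hc
    simp only [Finset.mem_filter, Finset.mem_univ, true_and, not_lt] at hc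
    exact hnf ⟨i, j, Or.inl hij, hc.1, hc.2⟩
  obtain ⟨C, hCW, hmc⟩ := exists_minCover_sub hcov
  refine ⟨C, hmc, notSat_of hsink ?_⟩
  intro i j k l h1 _h2
  obtain ⟨v, hvC, hvij⟩ := cover_choose hmc.1 h1
  have hvW : d v < D.w v := by
    have := hCW hvC
    simpa using this
  exact ⟨v, hvC, lt_of_lt_of_le hvW (le_trans (le_expW_self hvij) (Nat.le_add_right _ _))⟩

lemma case_y (hsink : ∀ i ∈ D.Vplus, D.IsSink i) (y : Fin n) (hy2 : ¬ 2 * D.w y ≤ d y)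
    (hstar : ∀ i j, uadj D i j → D.w i ≤ d i → D.w j ≤ d j → y = i ∨ y = j) :
    ∃ C, MinCover D C ∧ ¬ SatAt D C d := by
  classical
  have hcov : Cover D (insert y (Finset.univ.filter (fun v => d v < D.w v))) := by
    intro i j hij
    by_cases hi : d i < D.w i
    · exact Or.inl (Finset.mem_insert.2 (Or.inr (by simp [hi])))
    by_cases hj : d j < D.w j
    · exact Or.inr (Finset.mem_insert.2 (Or.inr (by simp [hj])))
    rcases hstar i j (Or.inl hij) (not_lt.1 hi) (not_lt.1 hj) with rfl | rfl
    · exact Or.inl (Finset.mem_insert_self _ _)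
    · exact Or.inr (Finset.mem_insert_self _ _)
  obtain ⟨C, hCW, hmc⟩ := exists_minCover_sub hcov
  refine ⟨C, hmc, notSat_of hsink ?_⟩
  intro i j k l h1 h2
  obtain ⟨v1, hv1C, hv1⟩ := cover_choose hmc.1 h1
  obtain ⟨v2, hv2C, hv2⟩ := cover_choose hmc.1 h2
  by_cases hd1 : d v1 < D.w v1
  · exact ⟨v1, hv1C, lt_of_lt_of_le hd1 (le_trans (le_expW_self hv1) (Nat.le_add_right _ _))⟩
  by_cases hd2 : d v2 < D.w v2
  · exact ⟨v2, hv2C, lt_of_lt_of_le hd2 (le_trans (le_expW_self hv2) (Nat.le_add_left _ _))⟩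
  have hv1y : v1 = y := by
    have := hCW hv1C
    simp only [Finset.mem_insert, Finset.mem_filter, Finset.mem_univ, true_and] at this
    tauto
  have hv2y : v2 = y := by
    have := hCW hv2C
    simp only [Finset.mem_insert, Finset.mem_filter, Finset.mem_univ, true_and] at this
    tauto
  subst hv1y
  refine ⟨v1, hv1C, ?_⟩
  have a1 : D.w v1 ≤ expW D i j v1 := le_expW_self hv1
  have a2 : D.w v1 ≤ expW D k l v1 := hv2y ▸ le_expW_self hv2
  omega

lemma hardL (hsink : ∀ i ∈ D.Vplus, D.IsSink i) (h2 : Sym2c D d) :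
    pair2E D d ∨ Tri D d := by
  classical
  by_contra hcon
  push_neg at hcon
  obtain ⟨hnp, hnt⟩ := hcon
  have pair2W : ∀ i j k l, uadj D i j → uadj D k l → ¬ (expW D i j + expW D k l ≤ d) :=
    fun i j k l hu1 hu2 hle =>
      hnp ⟨_, uadj_expW_mem hsink hu1, _, uadj_expW_mem hsink hu2, hle⟩
  have main : ∃ C, MinCover D C ∧ ¬ SatAt D C d := by
    by_cases hfe : ∃ i j, uadj D i j ∧ D.w i ≤ d i ∧ D.w j ≤ d j
    · obtain ⟨p0, q0, hu0, fp0, fq0⟩ := hfe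
      have meet : ∀ i j, uadj D i j → D.w i ≤ d i → D.w j ≤ d j →
          ∀ k l, uadj D k l → D.w k ≤ d k → D.w l ≤ d l →
          i = k ∨ i = l ∨ j = k ∨ j = l := by
        intro i j hij fi fj k l hkl fk fl
        by_contra hc
        push_neg at hc
        exact pair2W i j k l hij hkl
          (sum_le_of_full (uadj_ne hij) (uadj_ne hkl) hc.1 hc.2.1 hc.2.2.1 hc.2.2.2 fi fj fk fl)
      have star : ∃ z, D.w z ≤ d z ∧ (z = p0 ∨ z = q0) ∧
          ∀ i j, uadj D i j → D.w i ≤ d i → D.w j ≤ d j → z = i ∨ z = j := by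
        by_cases h1 : ∀ i j, uadj D i j → D.w i ≤ d i → D.w j ≤ d j → p0 = i ∨ p0 = j
        · exact ⟨p0, fp0, Or.inl rfl, h1⟩
        push_neg at h1
        obtain ⟨i1, j1, hu1, f1i, f1j, hne1i, hne1j⟩ := h1
        have hq0 : q0 = i1 ∨ q0 = j1 := by
          rcases meet p0 q0 hu0 fp0 fq0 i1 j1 hu1 f1i f1j with h | h | h | h
          · exact absurd h hne1i
          · exact absurd h hne1j
          · exact Or.inl h
          · exact Or.inr h
        obtain ⟨r, hqr, fr, hrp0, hrq0⟩ : ∃ r, uadj D q0 r ∧ D.w r ≤ d r ∧ r ≠ p0 ∧ r ≠ q0 := by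
          rcases hq0 with rfl | rfl
          · exact ⟨j1, hu1, f1j, fun h => hne1j h.symm, fun h => (uadj_ne hu1) h.symm⟩
          · exact ⟨i1, uadj_symm hu1, f1i, fun h => hne1i h.symm, uadj_ne hu1⟩
        by_cases h2' : ∀ i j, uadj D i j → D.w i ≤ d i → D.w j ≤ d j → q0 = i ∨ q0 = j
        · exact ⟨q0, fq0, Or.inr rfl, h2'⟩
        push_neg at h2'
        obtain ⟨i2, j2, hu2, f2i, f2j, hne2i, hne2j⟩ := h2'
        exfalso
        have hp : p0 = i2 ∨ p0 = j2 := by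
          rcases meet p0 q0 hu0 fp0 fq0 i2 j2 hu2 f2i f2j with h | h | h | h
          · exact Or.inl h
          · exact Or.inr h
          · exact absurd h hne2i
          · exact absurd h hne2j
        have hr : r = i2 ∨ r = j2 := by
          rcases meet q0 r hqr fq0 fr i2 j2 hu2 f2i f2j with h | h | h | h
          · exact absurd h hne2i
          · exact absurd h hne2j
          · exact Or.inl h
          · exact Or.inr h
        have hupr : uadj D p0 r := by
          rcases hp with h1 | h1 <;> rcases hr with h2 | h2
          · exact absurd (h2.trans h1.symm) hrp0
          · rw [h1, h2]; exact hu2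
          · rw [h1, h2]; exact uadj_symm hu2
          · exact absurd (h2.trans h1.symm) hrp0
        have hp0q0 : p0 ≠ q0 := uadj_ne hu0
        exact hnt ⟨p0, q0, r, hu0, uadj_symm (uadj_symm hqr), hupr,
          tri_single_le hp0q0 (fun h => hrq0 h.symm) (fun h => hrp0 h.symm) fp0 fq0 fr⟩
      obtain ⟨z, fz, _hzpq, hstar⟩ := star
      by_cases h2w : 2 * D.w z ≤ d z
      · obtain ⟨a, hza_u, fa, hza_ne⟩ : ∃ a, uadj D z a ∧ D.w a ≤ d a ∧ z ≠ a := by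
          rcases hstar p0 q0 hu0 fp0 fq0 with rfl | rfl
          · exact ⟨q0, hu0, fq0, uadj_ne hu0⟩
          · exact ⟨p0, uadj_symm hu0, fp0, uadj_ne (uadj_symm hu0)⟩
        have claimA : ∀ i j, uadj D i j → D.w i ≤ d i → D.w j ≤ d j → a = i ∨ a = j := by
          intro i j hij fi fj
          by_contra hc
          push_neg at hc
          rcases hstar i j hij fi fj with rfl | rfl
          · exact pair2W z a z j hza_u hij
              (share_le hza_ne (uadj_ne hij) hc.2 h2w fa fj)
          · exact pair2W z a z i hza_u (uadj_symm hij)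
              (share_le hza_ne (uadj_ne (uadj_symm hij)) hc.1 h2w fa fi)
        have claimB : ¬ 2 * D.w a ≤ d a := fun hca =>
          pair2W z a z a hza_u hza_u (double_le hza_ne h2w hca)
        exact case_y hsink a claimB claimA
      · exact case_y hsink z h2w hstar
    · exact case_one hsink hfe
  obtain ⟨C, hmc, hns⟩ := main
  exact hns (h2 C hmc)

end

section
variable {d : Fin n →₀ ℕ}

lemma satAt_of_two (hsink : ∀ i ∈ D.Vplus, D.IsSink i) {C : Finset (Fin n)}
    {u v z' : Fin n} (huz : uadj D u z') (hvz : uadj D v z')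
    (hzC : z' ∉ C)
    (hle : Finsupp.single u (D.w u) + Finsupp.single v (D.w v)
      + Finsupp.single z' (D.w z') ≤ d) :
    SatAt D C d := by
  refine ⟨Finsupp.single z' (D.w z'), ?_, ?_⟩
  · intro i hi
    rw [Finsupp.single_apply, if_neg (by rintro rfl; exact hzC hi)]
  · refine ⟨expW D u z', uadj_expW_mem hsink huz, expW D v z',
      uadj_expW_mem hsink hvz, ?_⟩
    have heq : expW D u z' + expW D v z' =
        (Finsupp.single u (D.w u) + Finsupp.single v (D.w v)
          + Finsupp.single z' (D.w z')) + Finsupp.single z' (D.w z') := by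
      rw [expW, expW]; abel
    rw [heq]
    exact add_le_add hle le_rfl

lemma satAt_of_esc (hsink : ∀ i ∈ D.Vplus, D.IsSink i) {C : Finset (Fin n)}
    (hC : MinCover D C) {i j : Fin n} (hiC : i ∈ C) (hjC : j ∈ C)
    (hle : Finsupp.single i (D.w i) + Finsupp.single j (D.w j) ≤ d) :
    SatAt D C d := by
  obtain ⟨si, hsiC, husi⟩ := minCover_escape hC hiC
  obtain ⟨sj, hsjC, husj⟩ := minCover_escape hC hjC
  refine ⟨Finsupp.single si (D.w si) + Finsupp.single sj (D.w sj), ?_, ?_⟩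
  · intro v hv
    rw [Finsupp.add_apply, Finsupp.single_apply, Finsupp.single_apply,
      if_neg (by rintro rfl; exact hsiC hv), if_neg (by rintro rfl; exact hsjC hv)]
    rfl
  · refine ⟨expW D i si, uadj_expW_mem hsink husi, expW D j sj,
      uadj_expW_mem hsink husj, ?_⟩
    have heq : expW D i si + expW D j sj =
        (Finsupp.single i (D.w i) + Finsupp.single j (D.w j))
          + (Finsupp.single si (D.w si) + Finsupp.single sj (D.w sj)) := by
      rw [expW, expW]; abel
    rw [heq]
    exact add_le_add hle le_rfl

lemma tri_sym2 (hsink : ∀ i ∈ D.Vplus, D.IsSink i) (h : Tri D d) : Sym2c D d := by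
  obtain ⟨i, j, k, hij, hjk, hik, hle⟩ := h
  intro C hC
  by_cases hiC : i ∈ C <;> by_cases hjC : j ∈ C <;> by_cases hkC : k ∈ C
  · -- all in C
    exact satAt_of_esc hsink hC hiC hjC (le_trans (self_le_add_right _ _) hle)
  · -- i, j ∈ C, k ∉ C
    exact satAt_of_two hsink hik hjk hkC hle
  · -- i, k ∈ C, j ∉ C
    refine satAt_of_two hsink hij (uadj_symm hjk) hjC ?_
    rw [show Finsupp.single i (D.w i) + Finsupp.single k (D.w k) + Finsupp.single j (D.w j)
      = Finsupp.single i (D.w i) + Finsupp.single j (D.w j) + Finsupp.single k (D.w k) from by abel]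
    exact hle
  · -- only i ∈ C : edge {j,k} uncovered
    exfalso
    obtain ⟨v, hvC, hv⟩ := cover_choose hC.1 hjk
    rcases hv with rfl | rfl
    · exact hjC hvC
    · exact hkC hvC
  · -- j, k ∈ C, i ∉ C
    refine satAt_of_two hsink (uadj_symm hij) (uadj_symm hik) hiC ?_
    rw [show Finsupp.single j (D.w j) + Finsupp.single k (D.w k) + Finsupp.single i (D.w i)
      = Finsupp.single i (D.w i) + Finsupp.single j (D.w j) + Finsupp.single k (D.w k) from by abel]
    exact hle
  · -- only j ∈ C: edge {i,k} uncovered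
    exfalso
    obtain ⟨v, hvC, hv⟩ := cover_choose hC.1 hik
    rcases hv with rfl | rfl
    · exact hiC hvC
    · exact hkC hvC
  · -- only k ∈ C: edge {i,j} uncovered
    exfalso
    obtain ⟨v, hvC, hv⟩ := cover_choose hC.1 hij
    rcases hv with rfl | rfl
    · exact hiC hvC
    · exact hjC hvC
  · -- none
    exfalso
    obtain ⟨v, hvC, hv⟩ := cover_choose hC.1 hij
    rcases hv with rfl | rfl
    · exact hiC hvC
    · exact hjC hvC

end

section Alg
variable {K : Type*} [Field K]

lemma X_mul_X_pow (i j : Fin n) (wj : ℕ) :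
    (X i * X j ^ wj : MvPoly n K) = monomial (Finsupp.single i 1 + Finsupp.single j wj) 1 := by
  rw [X_pow_eq_monomial, MvPolynomial.X, monomial_mul, one_mul]

lemma edgeIdeal_span (D : WOGraph n) :
    edgeIdeal K D = Ideal.span ((fun e => monomial e (1 : K)) '' ES D) := by
  rw [edgeIdeal, edgeIdealOn]
  congr 1
  ext m
  constructor
  · rintro ⟨i, j, -, -, hij, rfl⟩
    exact ⟨_, ⟨i, j, hij, rfl⟩, (X_mul_X_pow i j (D.w j)).symm⟩
  · rintro ⟨e, ⟨i, j, hij, rfl⟩, rfl⟩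
    exact ⟨i, j, Set.mem_univ i, Set.mem_univ j, hij, (X_mul_X_pow i j (D.w j)).symm⟩

lemma sq_span (D : WOGraph n) :
    (edgeIdeal K D) ^ 2 =
      Ideal.span ((fun e => monomial e (1 : K)) ''
        {dd | ∃ e1 ∈ ES D, ∃ e2 ∈ ES D, dd = e1 + e2}) := by
  rw [edgeIdeal_span, pow_two, Ideal.span_mul_span']
  congr 1
  ext m
  constructor
  · rintro ⟨x, ⟨e1, h1, rfl⟩, y, ⟨e2, h2, rfl⟩, rfl⟩
    exact ⟨e1 + e2, ⟨e1, h1, e2, h2, rfl⟩, by simp only [monomial_mul, one_mul]⟩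
  · rintro ⟨dd, ⟨e1, h1, e2, h2, rfl⟩, rfl⟩
    exact ⟨_, ⟨e1, h1, rfl⟩, _, ⟨e2, h2, rfl⟩, by simp only [monomial_mul, one_mul]⟩

lemma mem_sq_iff {D : WOGraph n} {p : MvPoly n K} :
    p ∈ (edgeIdeal K D) ^ 2 ↔ ∀ dd ∈ p.support, pair2E D dd := by
  rw [sq_span, mem_ideal_span_monomial_image]
  constructor
  · intro h dd hdd
    obtain ⟨si, ⟨e1, h1, e2, h2, rfl⟩, hle⟩ := h dd hdd
    exact ⟨e1, h1, e2, h2, hle⟩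
  · intro h dd hdd
    obtain ⟨e1, h1, e2, h2, hle⟩ := h dd hdd
    exact ⟨e1 + e2, ⟨e1, h1, e2, h2, rfl⟩, hle⟩

lemma monomial_mem_sq {D : WOGraph n} {dd : Fin n →₀ ℕ} (h : pair2E D dd) :
    (monomial dd (1 : K)) ∈ (edgeIdeal K D) ^ 2 := by
  rw [mem_sq_iff]
  intro d' hd'
  rw [MvPolynomial.mem_support_iff, MvPolynomial.coeff_monomial] at hd'
  rcases eq_or_ne dd d' with rfl | hne
  · exact h
  · exact absurd (if_neg hne) hd'

def PC (K : Type*) [Field K] (C : Finset (Fin n)) : Ideal (MvPoly n K) :=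
  Ideal.span (MvPolynomial.X '' (↑C : Set (Fin n)))

lemma mem_PC_iff {C : Finset (Fin n)} {p : MvPoly n K} :
    p ∈ PC K C ↔ ∀ m ∈ p.support, ∃ i ∈ C, m i ≠ 0 := by
  rw [PC, mem_ideal_span_X_image]
  simp only [Finset.mem_coe]

lemma not_mem_PC_sum {C : Finset (Fin n)} {p : MvPoly n K} :
    p ∉ PC K C ↔ ∃ m ∈ p.support, ∑ i ∈ C, m i = 0 := by
  rw [mem_PC_iff]
  push_neg
  refine exists_congr fun m => and_congr_right fun _ => ?_
  rw [Finset.sum_eq_zero_iff]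

lemma X_mem_PC_iff {C : Finset (Fin n)} {i : Fin n} :
    (X i : MvPoly n K) ∈ PC K C ↔ i ∈ C := by
  constructor
  · intro h
    obtain ⟨v, hv, hne⟩ := mem_PC_iff.1 h (Finsupp.single i 1)
      (by rw [MvPolynomial.support_X]; exact Finset.mem_singleton_self _)
    rw [Finsupp.single_apply] at hne
    by_cases hiv : i = v
    · exact hiv ▸ hv
    · exact absurd (if_neg hiv) hne
  · intro h
    exact Ideal.subset_span ⟨i, h, rfl⟩

lemma PC_prime (C : Finset (Fin n)) : (PC K (n := n) C).IsPrime := by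
  rw [Ideal.isPrime_iff]
  constructor
  · intro h
    rw [Ideal.eq_top_iff_one] at h
    obtain ⟨i, _, hne⟩ := mem_PC_iff.1 h 0
      (by rw [MvPolynomial.mem_support_iff]; simp)
    exact hne rfl
  · intro p q hpq
    by_contra hc
    push_neg at hc
    obtain ⟨hp, hq⟩ := hc
    have hp0 : p ≠ 0 := fun h => hp (h ▸ Submodule.zero_mem _)
    have hq0 : q ≠ 0 := fun h => hq (h ▸ Submodule.zero_mem _)
    obtain ⟨mp, hmp, hmpz⟩ := not_mem_PC_sum.1 hp
    obtain ⟨mq, hmq, hmqz⟩ := not_mem_PC_sum.1 hq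
    obtain ⟨u, hu, humin⟩ := exists_min_key C p hp0
    obtain ⟨v, hv, hvmin⟩ := exists_min_key C q hq0
    have huz : ∑ i ∈ C, u i = 0 :=
      Nat.le_zero.1 (hmpz ▸ keyC_fst_le C (humin mp hmp))
    have hvz : ∑ i ∈ C, v i = 0 :=
      Nat.le_zero.1 (hmqz ▸ keyC_fst_le C (hvmin mq hmq))
    have hmem := minsum_mem_support C hu humin hv hvmin
    obtain ⟨m', hm', hne⟩ := mem_PC_iff.1 hpq (u + v) hmem
    have h1 : u m' = 0 := Finset.sum_eq_zero_iff.1 huz m' hm'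
    have h2 : v m' = 0 := Finset.sum_eq_zero_iff.1 hvz m' hm'
    rw [Finsupp.add_apply, h1, h2] at hne
    exact hne rfl

lemma gen_mem_edgeIdeal {D : WOGraph n} {i j : Fin n} (hij : D.adj i j) :
    (X i * X j ^ D.w j : MvPoly n K) ∈ edgeIdeal K D :=
  Ideal.subset_span ⟨i, j, Set.mem_univ i, Set.mem_univ j, hij, rfl⟩

lemma edgeIdeal_le_PC {D : WOGraph n} {C : Finset (Fin n)} (hC : Cover D C) :
    edgeIdeal K D ≤ PC K C := by
  rw [edgeIdeal, edgeIdealOn, Ideal.span_le]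
  rintro m ⟨i, j, -, -, hij, rfl⟩
  rw [X_mul_X_pow]
  rw [SetLike.mem_coe, mem_PC_iff]
  intro m' hm'
  rw [MvPolynomial.mem_support_iff, MvPolynomial.coeff_monomial] at hm'
  have hm'' : m' = Finsupp.single i 1 + Finsupp.single j (D.w j) := by
    by_contra hne
    exact hm' (if_neg (fun h => hne h.symm))
  subst hm''
  rcases hC i j hij with h | h
  · refine ⟨i, h, ?_⟩
    rw [Finsupp.add_apply]
    have h1 : Finsupp.single i 1 i = 1 := Finsupp.single_eq_same
    omega
  · refine ⟨j, h, ?_⟩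
    rw [Finsupp.add_apply]
    have h1 : Finsupp.single j (D.w j) j = D.w j := Finsupp.single_eq_same
    have h2 := D.one_le_w j
    omega

lemma minCover_minimalPrimes {D : WOGraph n} {Cc : Finset (Fin n)} (hC : MinCover D Cc) :
    PC K Cc ∈ (edgeIdeal K D).minimalPrimes := by
  constructor
  · exact ⟨PC_prime Cc, edgeIdeal_le_PC hC.1⟩
  · rintro Q ⟨hQp, hQle⟩ hQPC
    rw [PC, Ideal.span_le]
    rintro x ⟨v, hv, rfl⟩
    obtain ⟨s, hsC, hus⟩ := minCover_escape hC (Finset.mem_coe.1 hv)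
    have hXs : (X s : MvPoly n K) ∉ Q := fun h =>
      hsC (X_mem_PC_iff.1 (hQPC h))
    rcases hus with h | h
    · have hgen : (X v * X s ^ D.w s : MvPoly n K) ∈ Q := hQle (gen_mem_edgeIdeal h)
      rcases hQp.mem_or_mem hgen with h' | h'
      · exact h'
      · exact absurd (hQp.mem_of_pow_mem _ h') hXs
    · have hgen : (X s * X v ^ D.w v : MvPoly n K) ∈ Q := hQle (gen_mem_edgeIdeal h)
      rcases hQp.mem_or_mem hgen with h' | h'
      · exact absurd h' hXs
      · exact hQp.mem_of_pow_mem _ h'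

open Classical in
lemma minimalPrimes_structure {D : WOGraph n} {P : Ideal (MvPoly n K)}
    (hP : P ∈ (edgeIdeal K D).minimalPrimes) :
    ∃ Cc, MinCover D Cc ∧ P = PC K Cc := by
  have hcov : Cover D (Finset.univ.filter (fun i => (X i : MvPoly n K) ∈ P)) := by
    intro i j hij
    have hgen : (X i * X j ^ D.w j : MvPoly n K) ∈ P := hP.1.2 (gen_mem_edgeIdeal hij)
    rcases hP.1.1.mem_or_mem hgen with h | h
    · exact Or.inl (by simp [h])
    · exact Or.inr (by simp [hP.1.1.mem_of_pow_mem _ h])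
  obtain ⟨Cc, hsub, hmc⟩ := exists_minCover_sub hcov
  have hle : PC K Cc ≤ P := by
    rw [PC, Ideal.span_le]
    rintro x ⟨v, hv, rfl⟩
    have hvC := hsub (Finset.mem_coe.1 hv)
    simp only [Finset.mem_filter, Finset.mem_univ, true_and] at hvC
    exact hvC
  have hge := hP.2 ⟨PC_prime Cc, edgeIdeal_le_PC hmc.1⟩ hle
  exact ⟨Cc, hmc, le_antisymm hge hle⟩

end Alg

section Alg2
variable {K : Type*} [Field K]

def NId (D : WOGraph n) (K : Type*) [Field K] (C : Finset (Fin n)) : Ideal (MvPoly n K) :=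
  Ideal.span ((fun e => monomial e (1 : K)) '' {dd | SatAt D C dd})

lemma satAt_mono {D : WOGraph n} {C : Finset (Fin n)} {d d' : Fin n →₀ ℕ}
    (h : SatAt D C d) (hdd : d ≤ d') : SatAt D C d' := by
  obtain ⟨e, he, hp⟩ := h
  exact ⟨e, he, pair2E_mono hp (add_le_add hdd le_rfl)⟩

lemma mem_NId_iff {D : WOGraph n} {C : Finset (Fin n)} {p : MvPoly n K} :
    p ∈ NId D K C ↔ ∀ dd ∈ p.support, SatAt D C dd := by
  rw [NId, mem_ideal_span_monomial_image]
  constructor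
  · intro h dd hdd
    obtain ⟨si, hsi, hle⟩ := h dd hdd
    exact satAt_mono hsi hle
  · intro h dd hdd
    exact ⟨dd, h dd hdd, le_rfl⟩

lemma sq_le_NId {D : WOGraph n} {C : Finset (Fin n)} :
    (edgeIdeal K D) ^ 2 ≤ NId D K C := by
  intro p hp
  rw [mem_NId_iff]
  intro dd hdd
  exact ⟨0, fun _ _ => rfl, by simpa using mem_sq_iff.1 hp dd hdd⟩

lemma lemS_aux {D : WOGraph n} (C : Finset (Fin n)) :
    ∀ N (h : MvPoly n K), h.support.card ≤ N → ∀ s, s ∉ PC K C →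
      s * h ∈ NId D K C → h ∈ NId D K C := by
  intro N
  induction N with
  | zero =>
    intro h hcard _s _hs _hsh
    have h0 : h = 0 := by
      rw [← MvPolynomial.support_eq_empty]
      exact Finset.card_eq_zero.1 (Nat.le_zero.1 hcard)
    rw [h0]
    exact Submodule.zero_mem _
  | succ N ih =>
    intro h hcard s hs hsh
    by_cases h0 : h = 0
    · rw [h0]; exact Submodule.zero_mem _
    have hs0 : s ≠ 0 := fun e => hs (e ▸ Submodule.zero_mem _)
    obtain ⟨κ, hκ, hκmin⟩ := exists_min_key C h h0
    obtain ⟨υ, hυ, hυmin⟩ := exists_min_key C s hs0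
    have hmem : υ + κ ∈ (s * h).support := minsum_mem_support C hυ hυmin hκ hκmin
    have hsat : SatAt D C (υ + κ) := mem_NId_iff.1 hsh _ hmem
    have hυ0 : ∀ i ∈ C, υ i = 0 := by
      obtain ⟨m0, hm0, hm0z⟩ := not_mem_PC_sum.1 hs
      have hle := keyC_fst_le C (hυmin m0 hm0)
      rw [hm0z] at hle
      exact fun i hi => Finset.sum_eq_zero_iff.1 (Nat.le_zero.1 hle) i hi
    have hκsat : SatAt D C κ := by
      obtain ⟨e, he, hp⟩ := hsat
      refine ⟨υ + e, fun i hi => by rw [Finsupp.add_apply, hυ0 i hi, he i hi], ?_⟩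
      rwa [show κ + (υ + e) = υ + κ + e from by abel]
    have hκN : monomial κ (1 : K) ∈ NId D K C := Ideal.subset_span ⟨κ, hκsat, rfl⟩
    have hmono : monomial κ (h.coeff κ) ∈ NId D K C := by
      rw [show monomial κ (MvPolynomial.coeff κ h) =
        MvPolynomial.C (MvPolynomial.coeff κ h) * monomial κ 1 from by
          rw [C_mul_monomial, mul_one]]
      exact Ideal.mul_mem_left _ _ hκN
    set h' := h - monomial κ (h.coeff κ) with hh'
    have hcoκ : h'.coeff κ = 0 := by
      simp [hh', MvPolynomial.coeff_sub, MvPolynomial.coeff_monomial]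
    have hco : ∀ m, m ≠ κ → h'.coeff m = h.coeff m := by
      intro m hm
      simp [hh', MvPolynomial.coeff_sub, MvPolynomial.coeff_monomial,
        if_neg (fun hx : κ = m => hm hx.symm)]
    have hsupp' : h'.support ⊆ h.support.erase κ := by
      intro m hm
      rw [MvPolynomial.mem_support_iff] at hm
      by_cases hmκ : m = κ
      · exact absurd (hmκ ▸ hcoκ) hm
      · exact Finset.mem_erase.2 ⟨hmκ, MvPolynomial.mem_support_iff.2
          (by rwa [hco m hmκ] at hm)⟩
    have hcard' : h'.support.card ≤ N := by
      have h1 := Finset.card_le_card hsupp'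
      have h2 := Finset.card_erase_lt_of_mem hκ
      omega
    have hsh' : s * h' ∈ NId D K C := by
      have heq : s * h' = s * h - s * monomial κ (h.coeff κ) := by rw [hh']; ring
      rw [heq]
      exact Submodule.sub_mem _ hsh (Ideal.mul_mem_left _ _ hmono)
    have hmem' : h' ∈ NId D K C := ih h' hcard' s hs hsh'
    have hfin : h = h' + monomial κ (h.coeff κ) := by rw [hh']; ring
    rw [hfin]
    exact Submodule.add_mem _ hmem' hmono

lemma lemS {D : WOGraph n} {C : Finset (Fin n)} {s h : MvPoly n K}
    (hs : s ∉ PC K C) (hsh : s * h ∈ NId D K C) : h ∈ NId D K C :=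
  lemS_aux C h.support.card h le_rfl s hs hsh

lemma mem_comap_map_iff {P : Ideal (MvPoly n K)} [P.IsPrime] (J : Ideal (MvPoly n K))
    (r : MvPoly n K) :
    r ∈ Ideal.comap (algebraMap (MvPoly n K) (Localization.AtPrime P))
      (Ideal.map (algebraMap (MvPoly n K) (Localization.AtPrime P)) J) ↔
      ∃ s, s ∉ P ∧ s * r ∈ J := by
  rw [Ideal.mem_comap, IsLocalization.mem_map_algebraMap_iff P.primeCompl]
  constructor
  · rintro ⟨⟨⟨j, hj⟩, ⟨s, hs⟩⟩, h⟩
    simp only at h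
    rw [← map_mul] at h
    obtain ⟨c, hc⟩ := (IsLocalization.eq_iff_exists P.primeCompl _).1 h
    refine ⟨↑c * s, ?_, ?_⟩
    · exact P.primeCompl.mul_mem c.2 hs
    · have : (↑c * s) * r = ↑c * (r * s) := by ring
      rw [this, hc]
      exact Ideal.mul_mem_left _ _ hj
  · rintro ⟨s, hs, hsr⟩
    refine ⟨⟨⟨s * r, hsr⟩, ⟨s, hs⟩⟩, ?_⟩
    simp only
    rw [← map_mul]
    exact congrArg _ (mul_comm r s)

lemma mem_symbolicPower_iff {J : Ideal (MvPoly n K)} {r : MvPoly n K} :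
    r ∈ symbolicPower J 2 ↔
      ∀ P ∈ J.minimalPrimes, ∃ s, s ∉ P ∧ s * r ∈ J ^ 2 := by
  rw [symbolicPower, Submodule.mem_iInf]
  refine forall_congr' fun P => ?_
  rw [Submodule.mem_iInf]
  refine forall_congr' fun hP => ?_
  haveI : P.IsPrime := hP.1.1
  exact mem_comap_map_iff (J ^ 2) r

lemma sq_le_symbolic {J : Ideal (MvPoly n K)} : J ^ 2 ≤ symbolicPower J 2 := by
  rw [symbolicPower]
  refine le_iInf fun P => le_iInf fun hP => ?_
  exact Ideal.le_comap_map

lemma mem_symb_iff {D : WOGraph n} (hsink : ∀ i ∈ D.Vplus, D.IsSink i) {p : MvPoly n K} :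
    p ∈ symbolicPower (edgeIdeal K D) 2 ↔ ∀ dd ∈ p.support, Sym2c D dd := by
  rw [mem_symbolicPower_iff]
  constructor
  · intro hp dd hdd Cc hCc
    obtain ⟨s, hs, hsp⟩ := hp (PC K Cc) (minCover_minimalPrimes hCc)
    have hN : s * p ∈ NId D K Cc := sq_le_NId hsp
    exact mem_NId_iff.1 (lemS hs hN) dd hdd
  · intro hp P hP
    obtain ⟨Cc, hCc, rfl⟩ := minimalPrimes_structure hP
    have hch : ∀ dd : p.support, ∃ e : Fin n →₀ ℕ,
        (∀ i ∈ Cc, e i = 0) ∧ pair2E D (↑dd + e) := fun dd => hp dd.1 dd.2 Cc hCc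
    choose e he1 he2 using hch
    classical
    set E : Fin n →₀ ℕ := ∑ dd : p.support, e dd with hE
    have hE0 : ∀ i ∈ Cc, E i = 0 := by
      intro i hi
      rw [hE, Finsupp.finset_sum_apply]
      exact Finset.sum_eq_zero fun dd _ => he1 dd i hi
    refine ⟨monomial E 1, ?_, ?_⟩
    · rw [not_mem_PC_sum]
      refine ⟨E, ?_, Finset.sum_eq_zero fun i hi => hE0 i hi⟩
      rw [MvPolynomial.mem_support_iff, MvPolynomial.coeff_monomial, if_pos rfl]
      exact one_ne_zero
    · rw [mem_sq_iff]
      intro dd hdd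
      have hsub := MvPolynomial.support_mul (monomial E (1 : K)) p hdd
      rw [Finset.mem_add] at hsub
      obtain ⟨u, hu, v, hv, rfl⟩ := hsub
      have hu' : u = E := by
        rw [MvPolynomial.support_monomial, if_neg one_ne_zero] at hu
        exact Finset.mem_singleton.1 hu
      subst hu'
      have hle : (↑(⟨v, hv⟩ : p.support) : Fin n →₀ ℕ) + e ⟨v, hv⟩ ≤ E + v := by
        have h1 : e ⟨v, hv⟩ ≤ E := by
          rw [hE]
          exact Finset.single_le_sum (f := e) (fun i _ => zero_le)
            (Finset.mem_univ (⟨v, hv⟩ : p.support))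
        calc v + e ⟨v, hv⟩ ≤ v + E := add_le_add le_rfl h1
        _ = E + v := add_comm _ _
      exact pair2E_mono (he2 ⟨v, hv⟩) hle
  end Alg2

end S2
end

set_option maxHeartbeats 2000000 in
/-- If `V⁺` are sinks, `I = I(D)` and `x^a ∉ I^{(2)}`, then
`√(I^{(2)} : x^a) = √(I^2 : x^a)`. -/
theorem stmt2 {n : ℕ} (K : Type*) [Field K] (D : WOGraph n)
    (hsink : ∀ i ∈ D.Vplus, D.IsSink i)
    (a : Fin n →₀ ℕ)
    (ha : (monomial a (1 : K)) ∉ symbolicPower (edgeIdeal K D) 2) :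
    (Submodule.colon (symbolicPower (edgeIdeal K D) 2)
        (Ideal.span {(monomial a (1 : K))})).radical =
      (Submodule.colon ((edgeIdeal K D) ^ 2) (Ideal.span {(monomial a (1 : K))})).radical := by
  classical
  open S2 in
  have hna : ¬ S2.Sym2c D a := by
    intro hs
    apply ha
    rw [S2.mem_symb_iff hsink]
    intro dd hdd
    rw [MvPolynomial.support_monomial, if_neg one_ne_zero] at hdd
    rwa [Finset.mem_singleton.1 hdd]
  have hnta : ¬ S2.Tri D a := fun ht => hna (S2.tri_sym2 hsink ht)
  apply le_antisymm
  · have key : Submodule.colon (symbolicPower (edgeIdeal K D) 2)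
        (Ideal.span {(monomial a (1 : K))}) ≤
        (Submodule.colon ((edgeIdeal K D) ^ 2)
          (Ideal.span {(monomial a (1 : K))})).radical := by
      intro g hg
      have hgf : g * monomial a 1 ∈ symbolicPower (edgeIdeal K D) 2 :=
        Ideal.mem_colon_span_singleton.1 hg
      have hsym : ∀ dd ∈ (g * monomial a 1).support, S2.Sym2c D dd :=
        (S2.mem_symb_iff hsink).1 hgf
      rw [MvPolynomial.as_sum g]
      apply Ideal.sum_mem
      intro c hc
      rw [show monomial c (MvPolynomial.coeff c g) =
        MvPolynomial.C (MvPolynomial.coeff c g) * monomial c 1 from by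
          rw [C_mul_monomial, mul_one]]
      apply Ideal.mul_mem_left
      have hmem : c + a ∈ (g * monomial a 1).support := by
        rw [MvPolynomial.mem_support_iff, MvPolynomial.coeff_mul_monomial, mul_one]
        exact MvPolynomial.mem_support_iff.1 hc
      have h2 : S2.Sym2c D (c + a) := hsym _ hmem
      rcases S2.hardL hsink h2 with hp | ht
      · rw [Ideal.mem_radical_iff]
        refine ⟨1, ?_⟩
        rw [pow_one, Ideal.mem_colon_span_singleton,
          show (monomial c 1 : MvPoly n K) * monomial a 1 = monomial (c + a) 1 from by
            rw [monomial_mul, one_mul]]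
        exact S2.monomial_mem_sq hp
      · obtain ⟨i, j, k, hij, hjk, hik, hle⟩ := ht
        set t : Fin n →₀ ℕ := Finsupp.single i (D.w i) + Finsupp.single j (D.w j)
          + Finsupp.single k (D.w k) with hT
        have hnotle : ¬ (t ≤ a) := fun hle' => hnta ⟨i, j, k, hij, hjk, hik, hle'⟩
        have hex : ∃ v, a v < t v := by
          by_contra hcon
          push_neg at hcon
          exact hnotle (Finsupp.le_def.2 fun v => hcon v)
        obtain ⟨v, hv⟩ := hex
        have hcv : 1 ≤ c v := by
          have hh := Finsupp.le_def.1 hle v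
          have hh2 : (c + a) v = c v + a v := Finsupp.add_apply c a v
          omega
        have hvmem : v = i ∨ v = j ∨ v = k := by
          by_contra hc'
          push_neg at hc'
          have h1 : i ≠ v := fun h => hc'.1 h.symm
          have h2 : j ≠ v := fun h => hc'.2.1 h.symm
          have h3 : k ≠ v := fun h => hc'.2.2 h.symm
          have ht0 : t v = 0 := by
            simp [hT, Finsupp.add_apply, Finsupp.single_apply, h1, h2, h3]
          omega
        obtain ⟨p, q, hvp, hvq, heq⟩ : ∃ p q, S2.uadj D v p ∧ S2.uadj D v q ∧
            S2.expW D v p + S2.expW D v q = t + Finsupp.single v (D.w v) := by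
          rcases hvmem with rfl | rfl | rfl
          · exact ⟨j, k, hij, hik, by rw [S2.expW, S2.expW, hT]; abel⟩
          · exact ⟨i, k, S2.uadj_symm hij, hjk, by rw [S2.expW, S2.expW, hT]; abel⟩
          · exact ⟨i, j, S2.uadj_symm hik, S2.uadj_symm hjk,
              by rw [S2.expW, S2.expW, hT]; abel⟩
        have hsv : Finsupp.single v (D.w v) ≤ D.w v • c := by
          rw [Finsupp.le_def]
          intro x
          rw [Finsupp.single_apply, Finsupp.smul_apply, smul_eq_mul]
          split_ifs with hx
          · subst hx
            calc D.w v = D.w v * 1 := (mul_one _).symm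
            _ ≤ D.w v * c v := Nat.mul_le_mul_left _ hcv
          · exact zero_le ..
        have hfinal : S2.expW D v p + S2.expW D v q ≤ (D.w v + 1) • c + a := by
          rw [heq]
          calc t + Finsupp.single v (D.w v) ≤ (c + a) + D.w v • c :=
            add_le_add hle hsv
          _ = (D.w v + 1) • c + a := by rw [succ_nsmul]; abel
        rw [Ideal.mem_radical_iff]
        refine ⟨D.w v + 1, ?_⟩
        rw [Ideal.mem_colon_span_singleton,
          show (monomial c 1 : MvPoly n K) ^ (D.w v + 1) * monomial a 1
            = monomial ((D.w v + 1) • c + a) 1 from by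
              rw [monomial_pow, one_pow, monomial_mul, one_mul]]
        exact S2.monomial_mem_sq ⟨S2.expW D v p, S2.uadj_expW_mem hsink hvp,
          S2.expW D v q, S2.uadj_expW_mem hsink hvq, hfinal⟩
    calc (Submodule.colon (symbolicPower (edgeIdeal K D) 2)
          (Ideal.span {(monomial a (1 : K))})).radical
        ≤ ((Submodule.colon ((edgeIdeal K D) ^ 2)
          (Ideal.span {(monomial a (1 : K))})).radical).radical :=
          Ideal.radical_mono key
      _ = _ := Ideal.radical_idem _
  · exact Ideal.radical_mono (Submodule.colon_mono S2.sq_le_symbolic le_rfl)
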